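/- In any run of the continued fraction algorithm of length N ∈ ℕ ∪ {∞} on input z ∈ ℂ, for every 1 ≤ n ≤ N one has |q_n·z − p_n| ≤ ε·|q_{n−1}·z − p_{n−1}|; consequently |q_n·z − p_n| ≤ ε^n for every 1 ≤ n ≤ N. -/

import Mathlib

noncomputable section

namespace CFNE

/-- τ = (Δ + i·√|Δ|)/2. -/
def tau (Δ : ℤ) : ℂ := ((Δ : ℂ) + Complex.I * (Real.sqrt |(Δ : ℝ)|)) / 2

/-- The imaginary quadratic order 𝒪 = ℤ[τ] of discriminant Δ, as a subring of ℂ. -/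
def O (Δ : ℤ) : Subring ℂ := Subring.closure {tau Δ}

/-- A (nonzero or zero) ideal of 𝒪, presented as a subset of ℂ. -/
structure IdealS (Δ : ℤ) where
  carrier : Set ℂ
  subset : carrier ⊆ (O Δ : Set ℂ)
  zero_mem : (0 : ℂ) ∈ carrier
  add_mem : ∀ x ∈ carrier, ∀ y ∈ carrier, x + y ∈ carrier
  neg_mem : ∀ x ∈ carrier, -x ∈ carrier
  smul_mem : ∀ r ∈ (O Δ : Set ℂ), ∀ x ∈ carrier, r * x ∈ carrier

/-- The ideal as an additive subgroup of ℂ. -/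
def IdealS.toAddSubgroup {Δ : ℤ} (I : IdealS Δ) : AddSubgroup ℂ where
  carrier := I.carrier
  zero_mem' := I.zero_mem
  add_mem' := fun hx hy => I.add_mem _ hx _ hy
  neg_mem' := fun hx => I.neg_mem _ hx

/-- The norm of an ideal: the index [𝒪 : 𝔟]. -/
def IdealS.norm {Δ : ℤ} (I : IdealS Δ) : ℕ :=
  I.toAddSubgroup.relIndex (O Δ).toAddSubgroup

/-- The ideal is nonzero. -/
def IdealS.Nonzero {Δ : ℤ} (I : IdealS Δ) : Prop := ∃ x ∈ I.carrier, x ≠ 0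

/-- Two nonzero ideals lie in the same class if x·𝔞 = y·𝔟 for some nonzero x, y ∈ 𝒪. -/
def SameClass {Δ : ℤ} (I J : IdealS Δ) : Prop :=
  ∃ x ∈ (O Δ : Set ℂ), ∃ y ∈ (O Δ : Set ℂ), x ≠ 0 ∧ y ≠ 0 ∧
    (fun t => x * t) '' I.carrier = (fun t => y * t) '' J.carrier

/-- A reduced ideal: a nonzero ideal of minimal norm in its ideal class. -/
def IsReduced {Δ : ℤ} (I : IdealS Δ) : Prop :=
  I.Nonzero ∧ ∀ J : IdealS Δ, J.Nonzero → SameClass I J → I.norm ≤ J.norm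

/-- The inverse fractional ideal 𝔟⁻¹ = {x ∈ ℂ : x·𝔟 ⊆ 𝒪}. -/
def invSet {Δ : ℤ} (I : IdealS Δ) : Set ℂ :=
  {x : ℂ | ∀ y ∈ I.carrier, x * y ∈ (O Δ : Set ℂ)}

/-- The fractional ideal a·𝔟 + b·𝔟⁻¹, as a subset of ℂ. -/
def combSet {Δ : ℤ} (I : IdealS Δ) (a b : ℂ) : Set ℂ :=
  {u : ℂ | ∃ s ∈ I.carrier, ∃ t ∈ invSet I, u = a * s + b * t}

/-- The ideal x·𝒪 + y·𝒪 of 𝒪 generated by x and y, as a subset of ℂ. -/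
def genSet (Δ : ℤ) (x y : ℂ) : Set ℂ :=
  {u : ℂ | ∃ s ∈ (O Δ : Set ℂ), ∃ t ∈ (O Δ : Set ℂ), u = x * s + y * t}

/-- The set is the carrier of a reduced ideal of 𝒪. -/
def IsReducedSet (Δ : ℤ) (S : Set ℂ) : Prop :=
  ∃ J : IdealS Δ, IsReduced J ∧ J.carrier = S

/-- B is admissible with ε ∈ (0,1): B is a nonempty finite subset of 𝒪 ∖ {0}, and for every
reduced ideal 𝔟 with 𝔟 ∩ B ≠ ∅, the discs D(a/b, ε/|b|) over b ∈ 𝔟 ∩ B, a ∈ 𝔟⁻¹ with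
a·𝔟 + b·𝔟⁻¹ reduced, cover ℂ. -/
def Admissible (Δ : ℤ) (B : Set ℂ) (ε : ℝ) : Prop :=
  B.Nonempty ∧ B.Finite ∧ B ⊆ (O Δ : Set ℂ) ∧ (0 : ℂ) ∉ B ∧
  ∀ I : IdealS Δ, IsReduced I → (I.carrier ∩ B).Nonempty →
    ∀ z : ℂ, ∃ b ∈ I.carrier ∩ B, ∃ a ∈ invSet I,
      IsReducedSet Δ (combSet I a b) ∧ ‖z - a / b‖ ≤ ε / ‖b‖

/-- μ = max{|b| : b ∈ B}. -/
def mu (B : Set ℂ) : ℝ := sSup ((fun w : ℂ => ‖w‖) '' B)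

/-- A run of the continued fraction algorithm of length N ∈ ℕ ∪ {∞} on input z. -/
structure Run (Δ : ℤ) (B : Set ℂ) (ε : ℝ) (z : ℂ) (N : ℕ∞) where
  a : ℤ → ℂ
  b : ℤ → ℂ
  p : ℤ → ℂ
  q : ℤ → ℂ
  zs : ℤ → ℂ
  b_zero : b 0 = 1
  p_neg_one : p (-1) = 0
  q_neg_one : q (-1) = 1
  p_zero : p 0 = 1
  q_zero : q 0 = 0
  zs_zero : zs 0 = z
  ha : ∀ n : ℕ, 1 ≤ n → (n : ℕ∞) ≤ N → a n ∈ O Δ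
  hb : ∀ n : ℕ, 1 ≤ n → (n : ℕ∞) ≤ N → b n ∈ B
  hne : ∀ n : ℕ, 1 ≤ n → (n : ℕ∞) ≤ N → b n * zs ((n : ℤ) - 1) - a n ≠ 0
  hclose : ∀ n : ℕ, 1 ≤ n → (n : ℕ∞) ≤ N →
    ‖b n * zs ((n : ℤ) - 1) - a n‖ ≤ ε * ‖b ((n : ℤ) - 1)‖
  hp : ∀ n : ℕ, 1 ≤ n → (n : ℕ∞) ≤ N →
    p n = (a n * p ((n : ℤ) - 1) + b n * p ((n : ℤ) - 2)) / b ((n : ℤ) - 1)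
  hq : ∀ n : ℕ, 1 ≤ n → (n : ℕ∞) ≤ N →
    q n = (a n * q ((n : ℤ) - 1) + b n * q ((n : ℤ) - 2)) / b ((n : ℤ) - 1)
  hz : ∀ n : ℕ, 1 ≤ n → (n : ℕ∞) ≤ N →
    zs n = b ((n : ℤ) - 1) / (b n * zs ((n : ℤ) - 1) - a n)
  hpO : ∀ n : ℕ, 1 ≤ n → (n : ℕ∞) ≤ N → p n ∈ O Δ
  hqO : ∀ n : ℕ, 1 ≤ n → (n : ℕ∞) ≤ N → q n ∈ O Δ
  hred : ∀ n : ℕ, 1 ≤ n → (n : ℕ∞) ≤ N → IsReducedSet Δ (genSet Δ (p n) (q n))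


section Aux

variable {Δ : ℤ} {B : Set ℂ} {ε : ℝ} {z : ℂ} {N : ℕ∞}

lemma bne (hB0 : (0:ℂ) ∉ B) (R : Run Δ B ε z N) (n : ℕ) (hnN : (n : ℕ∞) ≤ N) :
    R.b n ≠ 0 := by
  rcases Nat.eq_zero_or_pos n with h | h
  · subst h; simp [R.b_zero]
  · intro h0; exact hB0 (h0 ▸ R.hb n h hnN)

lemma step (hB0 : (0:ℂ) ∉ B) (R : Run Δ B ε z N) (m : ℕ)
    (hN : ((m+1 : ℕ) : ℕ∞) ≤ N)
    (hIH : R.q ((m:ℤ)-1) * z - R.p ((m:ℤ)-1) = -(R.zs m) * (R.q m * z - R.p m)) :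
    R.q (m+1) * z - R.p (m+1) =
      -(R.b (m+1) * R.zs m - R.a (m+1)) * (R.q m * z - R.p m) / R.b m := by
  have hmN : (m : ℕ∞) ≤ N := le_trans (by exact_mod_cast Nat.le_succ m) hN
  have h1 : 1 ≤ m + 1 := Nat.le_add_left 1 m
  have hq := R.hq (m+1) h1 hN
  have hp := R.hp (m+1) h1 hN
  have e1 : ((m+1 : ℕ) : ℤ) - 1 = (m : ℤ) := by push_cast; ring
  have e2 : ((m+1 : ℕ) : ℤ) - 2 = (m : ℤ) - 1 := by push_cast; ring
  have ec : ((m+1 : ℕ) : ℤ) = (m : ℤ) + 1 := by push_cast; ring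
  rw [e1, e2, ec] at hq hp
  have hb : R.b (m : ℤ) ≠ 0 := bne hB0 R m hmN
  rw [hq, hp]
  field_simp
  linear_combination (R.b ((m:ℤ)+1)) * hIH

lemma key (hB0 : (0:ℂ) ∉ B) (R : Run Δ B ε z N) :
    ∀ n : ℕ, (n : ℕ∞) ≤ N →
      R.q ((n:ℤ)-1) * z - R.p ((n:ℤ)-1) = -(R.zs n) * (R.q n * z - R.p n) := by
  intro n
  induction n with
  | zero => intro _; simp [R.q_neg_one, R.p_neg_one, R.q_zero, R.p_zero, R.zs_zero]
  | succ m ih =>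
    intro hN
    have hmN : (m : ℕ∞) ≤ N := le_trans (by exact_mod_cast Nat.le_succ m) hN
    have h1 : 1 ≤ m + 1 := Nat.le_add_left 1 m
    have hIH := ih hmN
    have hst := step hB0 R m hN hIH
    have hz := R.hz (m+1) h1 hN
    have hd := R.hne (m+1) h1 hN
    have e1 : ((m+1 : ℕ) : ℤ) - 1 = (m : ℤ) := by push_cast; ring
    have ec : ((m+1 : ℕ) : ℤ) = (m : ℤ) + 1 := by push_cast; ring
    rw [e1] at hz hd ⊢
    rw [ec] at hz hd ⊢
    have hb : R.b (m : ℤ) ≠ 0 := bne hB0 R m hmN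
    rw [hst, hz]
    field_simp

lemma ineq1 (hε0 : 0 < ε) (hB0 : (0:ℂ) ∉ B) (R : Run Δ B ε z N)
    (n : ℕ) (hn : 1 ≤ n) (hnN : (n : ℕ∞) ≤ N) :
    ‖R.q n * z - R.p n‖ ≤
      ε * ‖R.q ((n : ℤ) - 1) * z - R.p ((n : ℤ) - 1)‖ := by
  obtain ⟨m, rfl⟩ : ∃ m, n = m + 1 := ⟨n - 1, by omega⟩
  have hmN : (m : ℕ∞) ≤ N := le_trans (by exact_mod_cast Nat.le_succ m) hnN
  have hIH := key hB0 R m hmN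
  have hst := step hB0 R m hnN hIH
  have hcl := R.hclose (m+1) hn hnN
  have e1 : ((m+1 : ℕ) : ℤ) - 1 = (m : ℤ) := by push_cast; ring
  have ec : ((m+1 : ℕ) : ℤ) = (m : ℤ) + 1 := by push_cast; ring
  rw [e1] at hcl ⊢
  rw [ec] at hcl ⊢
  have hb : R.b (m : ℤ) ≠ 0 := bne hB0 R m hmN
  have hbpos : 0 < ‖R.b (m : ℤ)‖ := norm_pos_iff.mpr hb
  rw [hst, norm_div, norm_mul, norm_neg]
  rw [div_le_iff₀ hbpos]
  have h2 : ‖R.q (m:ℤ) * z - R.p (m:ℤ)‖ ≥ 0 := norm_nonneg _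
  nlinarith [mul_le_mul_of_nonneg_right hcl h2]

lemma ineq2 (hε0 : 0 < ε) (hB0 : (0:ℂ) ∉ B) (R : Run Δ B ε z N) :
    ∀ n : ℕ, 1 ≤ n → (n : ℕ∞) ≤ N →
      ‖R.q n * z - R.p n‖ ≤ ε ^ n := by
  intro n
  induction n with
  | zero => intro h; omega
  | succ m ih =>
    intro _ hN
    have h := ineq1 hε0 hB0 R (m+1) (Nat.le_add_left 1 m) hN
    have e1 : ((m+1 : ℕ) : ℤ) - 1 = (m : ℤ) := by push_cast; ring
    rw [e1] at h
    rcases Nat.eq_zero_or_pos m with hm | hm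
    · subst hm
      simp only [Nat.cast_zero, R.q_zero, R.p_zero] at h
      simpa using h.trans (by simp)
    · have hmN : (m : ℕ∞) ≤ N := le_trans (by exact_mod_cast Nat.le_succ m) hN
      have := ih hm hmN
      calc ‖R.q (m+1 : ℕ) * z - R.p (m+1 : ℕ)‖
          ≤ ε * ‖R.q (m:ℤ) * z - R.p (m:ℤ)‖ := h
        _ ≤ ε * ε ^ m := by nlinarith
        _ = ε ^ (m+1) := by ring

end Aux

theorem stmt1 (Δ : ℤ) (hΔneg : Δ < 0) (hΔmod : Δ % 4 = 0 ∨ Δ % 4 = 1)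
    (B : Set ℂ) (ε : ℝ) (hε0 : 0 < ε) (hε1 : ε < 1) (hadm : Admissible Δ B ε)
    (z : ℂ) (N : ℕ∞) (R : Run Δ B ε z N)
    (n : ℕ) (hn : 1 ≤ n) (hnN : (n : ℕ∞) ≤ N) :
    ‖R.q n * z - R.p n‖ ≤
      ε * ‖R.q ((n : ℤ) - 1) * z - R.p ((n : ℤ) - 1)‖ ∧
    ‖R.q n * z - R.p n‖ ≤ ε ^ n := by
  exact ⟨ineq1 hε0 hadm.2.2.2.1 R n hn hnN, ineq2 hε0 hadm.2.2.2.1 R n hn hnN⟩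

end CFNE
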